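/- Suppose 0 < r ≤ d, σ > 0, K > 0, k* > K, and 0 < δ ≤ (k* − K)(K/k*)^{λ/σ − κ}. Let v be given on (K, k*) by v(x) := (k* − K)(k*/x)^κ·((K/x)^{−λ/σ} − (K/x)^{λ/σ})/D + δ(K/x)^κ·((k*/x)^{λ/σ} − (k*/x)^{−λ/σ})/D with D := (k*/K)^{λ/σ} − (k*/K)^{−λ/σ}. Then v′(x) ≥ 0 for every x ∈ (K, k*), i.e. v is non-decreasing on (K, k*). -/

import Mathlib

noncomputable section

/-- For `0 < r ≤ d` and `0 < δ ≤ (k* − K)(K/k*)^{λ/σ − κ}`, the candidate value function `v`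
is non-decreasing on `(K, k*)`. -/
theorem candidate_nondecreasing_middle (r d σ K δ : ℝ)
    (hr : 0 < r) (hrd : r ≤ d) (hσ : 0 < σ) (hK : 0 < K) (hδ : 0 < δ)
    (lam κ : ℝ)
    (hlam : lam = Real.sqrt (2 * r + ((r - d - σ ^ 2 / 2) / σ) ^ 2))
    (hκ : κ = (r - d - σ ^ 2 / 2) / σ ^ 2)
    (k : ℝ) (hk : K < k)
    (hδle : δ ≤ (k - K) * (K / k) ^ (lam / σ - κ))
    (D : ℝ) (hD : D = (k / K) ^ (lam / σ) - (k / K) ^ (-(lam / σ)))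
    (v : ℝ → ℝ)
    (hv : v = fun x =>
      (k - K) * (k / x) ^ κ * (((K / x) ^ (-(lam / σ)) - (K / x) ^ (lam / σ)) / D) +
        δ * (K / x) ^ κ * (((k / x) ^ (lam / σ) - (k / x) ^ (-(lam / σ))) / D)) :
    ∀ x ∈ Set.Ioo K k, 0 ≤ deriv v x := by
  set α : ℝ := lam / σ with hα
  have hk0 : 0 < k := hK.trans hk
  -- lam > 0 and α > |κ|
  have hκσ : (r - d - σ ^ 2 / 2) / σ = κ * σ := by
    rw [hκ]; field_simp
  have habs : |κ| * σ < lam := by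
    rw [hlam, hκσ]
    have h1 : |κ| * σ = Real.sqrt ((κ * σ) ^ 2) := by
      rw [Real.sqrt_sq_eq_abs, abs_mul, abs_of_pos hσ]
    rw [h1]
    apply Real.sqrt_lt_sqrt (by positivity)
    linarith
  have hκα : |κ| < α := by
    rw [hα, lt_div_iff₀ hσ]; exact habs
  have hα1 : 0 < α - κ := by
    have := abs_lt.mp hκα
    linarith [this.2]
  have hα2 : 0 < α + κ := by
    have := abs_lt.mp hκα
    linarith [this.1]
  have hαpos : 0 < α := by linarith
  -- D > 0
  have hbk : (1:ℝ) < k / K := (one_lt_div hK).mpr hk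
  have hD0 : 0 < D := by
    rw [hD]
    have : (k / K) ^ (-α) < (k / K) ^ α := by
      apply Real.rpow_lt_rpow_left_iff hbk |>.mpr
      linarith
    linarith
  have hDne : D ≠ 0 := ne_of_gt hD0
  -- positivity of various rpows
  have hKα : 0 < K ^ α := Real.rpow_pos_of_pos hK α
  have hkα : 0 < k ^ α := Real.rpow_pos_of_pos hk0 α
  have hKκ : 0 < K ^ κ := Real.rpow_pos_of_pos hK κ
  have hkκ : 0 < k ^ κ := Real.rpow_pos_of_pos hk0 κ
  -- key inequality 2 (for C2 ≤ 0): δ * K^κ * k^α ≤ (k-K) * k^κ * K^α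
  have hid2 : (K / k) ^ (α - κ) * (K ^ κ * k ^ α) = k ^ κ * K ^ α := by
    rw [Real.div_rpow hK.le hk0.le, Real.rpow_sub hK, Real.rpow_sub hk0]
    field_simp
  have hC2 : δ * (K ^ κ * k ^ α) ≤ (k - K) * (k ^ κ * K ^ α) := by
    calc δ * (K ^ κ * k ^ α) ≤ ((k - K) * (K / k) ^ (α - κ)) * (K ^ κ * k ^ α) := by
          apply mul_le_mul_of_nonneg_right hδle (by positivity)
      _ = (k - K) * (k ^ κ * K ^ α) := by rw [mul_assoc, hid2]
  -- key inequality 1 (for C1 ≥ 0): δ * K^κ * k^(-α) ≤ (k-K) * k^κ * K^(-α)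
  have hmid : (K / k) ^ (α - κ) ≤ (k / K) ^ (α + κ) := by
    have h1 : (K / k) ^ (α - κ) = (k / K) ^ (κ - α) := by
      rw [show (K / k) = (k / K)⁻¹ by rw [inv_div],
        Real.inv_rpow (by positivity), ← Real.rpow_neg (by positivity), neg_sub]
    rw [h1]
    apply (Real.rpow_le_rpow_left_iff hbk).mpr
    linarith
  have hid1 : (k / K) ^ (α + κ) * (K ^ κ * k ^ (-α)) = k ^ κ * K ^ (-α) := by
    rw [Real.div_rpow hk0.le hK.le, Real.rpow_add hk0, Real.rpow_add hK,
      Real.rpow_neg hK.le, Real.rpow_neg hk0.le]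
    field_simp
  have hC1 : δ * (K ^ κ * k ^ (-α)) ≤ (k - K) * (k ^ κ * K ^ (-α)) := by
    calc δ * (K ^ κ * k ^ (-α)) ≤ ((k - K) * (k / K) ^ (α + κ)) * (K ^ κ * k ^ (-α)) := by
          apply mul_le_mul_of_nonneg_right _ (by positivity)
          exact hδle.trans (mul_le_mul_of_nonneg_left hmid (by linarith))
      _ = (k - K) * (k ^ κ * K ^ (-α)) := by rw [mul_assoc, hid1]
  -- coefficients
  set C1 : ℝ := ((k - K) * (k ^ κ * K ^ (-α)) - δ * (K ^ κ * k ^ (-α))) / D with hC1def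
  set C2 : ℝ := (δ * (K ^ κ * k ^ α) - (k - K) * (k ^ κ * K ^ α)) / D with hC2def
  have hC1nn : 0 ≤ C1 := div_nonneg (by linarith) hD0.le
  have hC2np : C2 ≤ 0 := div_nonpos_of_nonpos_of_nonneg (by linarith) hD0.le
  set g : ℝ → ℝ := fun y => C1 * y ^ (α - κ) + C2 * y ^ (-(α + κ)) with hg
  -- v = g on Ioi 0
  have heq : Set.EqOn v g (Set.Ioi 0) := by
    intro y hy
    have hy0 : (0:ℝ) < y := hy
    have hyκ : (0:ℝ) < y ^ κ := Real.rpow_pos_of_pos hy0 κ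
    have hyα : (0:ℝ) < y ^ α := Real.rpow_pos_of_pos hy0 α
    rw [hv]
    simp only [hg, hC1def, hC2def]
    rw [Real.rpow_neg (by positivity : (0:ℝ) ≤ K / y),
      Real.rpow_neg (by positivity : (0:ℝ) ≤ k / y)]
    simp only [Real.div_rpow hK.le hy0.le, Real.div_rpow hk0.le hy0.le,
      Real.rpow_sub hy0, Real.rpow_neg hy0.le, Real.rpow_add hy0,
      Real.rpow_neg hK.le, Real.rpow_neg hk0.le]
    have hyαne : y ^ α ≠ 0 := ne_of_gt hyα
    have hyκne : y ^ κ ≠ 0 := ne_of_gt hyκ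
    field_simp
    ring
  intro x hx
  have hx0 : (0:ℝ) < x := hK.trans hx.1
  have hxne : x ≠ 0 := ne_of_gt hx0
  -- deriv v x = deriv g x
  have hev : v =ᶠ[nhds x] g :=
    Filter.eventuallyEq_of_mem (isOpen_Ioi.mem_nhds hx0) heq
  rw [hev.deriv_eq]
  -- compute deriv g x
  have h1 : HasDerivAt (fun y : ℝ => y ^ (α - κ)) ((α - κ) * x ^ (α - κ - 1)) x :=
    Real.hasDerivAt_rpow_const (Or.inl hxne)
  have h2 : HasDerivAt (fun y : ℝ => y ^ (-(α + κ))) ((-(α + κ)) * x ^ (-(α + κ) - 1)) x :=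
    Real.hasDerivAt_rpow_const (Or.inl hxne)
  have hgd : HasDerivAt g
      (C1 * ((α - κ) * x ^ (α - κ - 1)) + C2 * ((-(α + κ)) * x ^ (-(α + κ) - 1))) x :=
    (h1.const_mul C1).add (h2.const_mul C2)
  rw [hgd.deriv]
  have hp1 : (0:ℝ) < x ^ (α - κ - 1) := Real.rpow_pos_of_pos hx0 _
  have hp2 : (0:ℝ) < x ^ (-(α + κ) - 1) := Real.rpow_pos_of_pos hx0 _
  have ht1 : 0 ≤ C1 * ((α - κ) * x ^ (α - κ - 1)) := by positivity
  have ht2 : 0 ≤ C2 * ((-(α + κ)) * x ^ (-(α + κ) - 1)) := by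
    have : C2 * ((-(α + κ)) * x ^ (-(α + κ) - 1)) = (-C2) * ((α + κ) * x ^ (-(α + κ) - 1)) := by
      ring
    rw [this]
    have : 0 ≤ -C2 := by linarith
    positivity
  linarith

end
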